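/- arXiv:2008.02571 — 5 statements merged into one kernel-verified Lean document; each statement's English description precedes it below -/
import Mathlib

section
/- Let Λ = ℤ_p⟦T⟧ be the power series ring in one variable T over the p-adic integers ℤ_p, and let X be a finitely generated Λ-module satisfying: (1) the T-torsion submodule X[T] = {x ∈ X : T·x = 0} is zero, and (2) the quotient X/TX is a free ℤ_p-module of rank r. Then X is a free Λ-module of rank r. -/
/-- **Lemma 1.1.2 (commutative algebra lemma).**
Let `Λ = ℤ_p⟦T⟧` and let `X` be a finitely generated `Λ`-module such that
`X[T] = 0` and `X/TX` is a free `ℤ_p`-module of rank `r`. Then `X` is a free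
`Λ`-module of rank `r`. -/
theorem free_of_T_torsion_free_and_quotient_free
    (p : ℕ) [Fact p.Prime] (r : ℕ)
    (X : Type*) [AddCommGroup X]
    [Module ℤ_[p] X] [Module (PowerSeries ℤ_[p]) X]
    [IsScalarTower ℤ_[p] (PowerSeries ℤ_[p]) X]
    [Module.Finite (PowerSeries ℤ_[p]) X]
    (htors : ∀ x : X, (PowerSeries.X : PowerSeries ℤ_[p]) • x = 0 → x = 0)
    (hfree : Nonempty
      ((X ⧸ (Ideal.span {(PowerSeries.X : PowerSeries ℤ_[p])} •
        (⊤ : Submodule (PowerSeries ℤ_[p]) X))) ≃ₗ[ℤ_[p]] (Fin r → ℤ_[p]))) :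
    Nonempty (X ≃ₗ[PowerSeries ℤ_[p]] (Fin r → PowerSeries ℤ_[p])) := by
  obtain ⟨e⟩ := hfree
  set Λ : Type _ := PowerSeries ℤ_[p] with hΛ
  set N : Submodule Λ X :=
    Ideal.span {(PowerSeries.X : Λ)} • (⊤ : Submodule Λ X) with hN
  -- the basis of the quotient
  let b : Module.Basis (Fin r) ℤ_[p] (X ⧸ N) := Module.Basis.ofEquivFun e
  -- lift the basis to `X`
  choose x hx using fun i => Submodule.Quotient.mk_surjective N (b i)
  -- the ideal `(X)` is contained in the Jacobson radical of `Λ`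
  have hXnu : ¬ IsUnit (PowerSeries.X : Λ) := by
    rw [PowerSeries.isUnit_iff_constantCoeff, PowerSeries.constantCoeff_X]
    exact not_isUnit_zero
  have hXjac : Ideal.span {(PowerSeries.X : Λ)} ≤ Ideal.jacobson ⊥ := by
    rw [IsLocalRing.jacobson_eq_maximalIdeal (⊥ : Ideal Λ) bot_ne_top]
    rw [Ideal.span_le, Set.singleton_subset_iff]
    exact hXnu
  have hXmem : (PowerSeries.X : Λ) ∈ Ideal.span {(PowerSeries.X : Λ)} :=
    Ideal.subset_span rfl
  -- scalar compatibility: `C a • y = a • y`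
  have hCsmul : ∀ (a : ℤ_[p]) (y : X), ((PowerSeries.C (R := ℤ_[p])) a : Λ) • y = a • y := by
    intro a y
    rw [PowerSeries.C_eq_algebraMap]
    exact algebraMap_smul Λ a y
  -- the linear map `Λ^r → X`
  set φ : (Fin r → Λ) →ₗ[Λ] X := Fintype.linearCombination Λ x with hφ
  have hφapp : ∀ v : Fin r → Λ, φ v = ∑ i, v i • x i := fun v =>
    Fintype.linearCombination_apply Λ x v
  -- pushing combinations to the quotient
  have hmksum : ∀ c : Fin r → ℤ_[p],
      (Submodule.Quotient.mk (∑ i, ((PowerSeries.C (R := ℤ_[p])) (c i) : Λ) • x i) : X ⧸ N)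
        = ∑ i, c i • b i := by
    intro c
    rw [← Submodule.mkQ_apply, map_sum]
    refine Finset.sum_congr rfl fun i _ => ?_
    rw [Submodule.mkQ_apply, hCsmul, Submodule.Quotient.mk_smul, hx i]
  -- Surjectivity via Nakayama
  have hgen : (⊤ : Submodule Λ X) ≤
      Submodule.span Λ (Set.range x) ⊔ Ideal.span {(PowerSeries.X : Λ)} • ⊤ := by
    intro y _
    have hq : (∑ i, b.repr (Submodule.Quotient.mk y) i • b i)
        = Submodule.Quotient.mk y := b.sum_repr _
    set z : X := ∑ i, ((PowerSeries.C (R := ℤ_[p])) (b.repr (Submodule.Quotient.mk y) i) : Λ) • x i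
      with hz
    have hmkz : (Submodule.Quotient.mk z : X ⧸ N) = Submodule.Quotient.mk y := by
      rw [hz, hmksum, hq]
    have hzmem : z ∈ Submodule.span Λ (Set.range x) :=
      Submodule.sum_mem _ fun i _ =>
        Submodule.smul_mem _ _ (Submodule.subset_span (Set.mem_range_self i))
    have hyz : y - z ∈ N := by
      rw [← Submodule.Quotient.eq]
      exact hmkz.symm
    have : y = z + (y - z) := by abel
    rw [this]
    exact Submodule.add_mem _ (Submodule.mem_sup_left hzmem) (Submodule.mem_sup_right hyz)
  have hspan : (⊤ : Submodule Λ X) ≤ Submodule.span Λ (Set.range x) :=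
    Submodule.le_of_le_smul_of_le_jacobson_bot Module.Finite.fg_top hXjac hgen
  have hsurj : Function.Surjective φ := by
    rw [← LinearMap.range_eq_top, hφ, Fintype.range_linearCombination]
    exact top_le_iff.mp hspan
  -- key step: every kernel element is `X` times a kernel element
  have hstep : ∀ k : Fin r → Λ, φ k = 0 →
      ∃ d : Fin r → Λ, φ d = 0 ∧ ∀ i, k i = PowerSeries.X * d i := by
    intro k hk
    set c : Fin r → ℤ_[p] := fun i => PowerSeries.constantCoeff (k i) with hc
    have hdvd : ∀ i, (PowerSeries.X : Λ) ∣ (k i - (PowerSeries.C (R := ℤ_[p])) (c i)) := by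
      intro i
      rw [PowerSeries.X_dvd_iff]
      simp [hc]
    choose d hd using hdvd
    have hki : ∀ i, k i = (PowerSeries.C (R := ℤ_[p])) (c i) + PowerSeries.X * d i := by
      intro i
      have := hd i
      rw [← this]
      ring
    set w : X := ∑ i, d i • x i with hw
    have hsplit : (0 : X) = (∑ i, ((PowerSeries.C (R := ℤ_[p])) (c i) : Λ) • x i)
        + (PowerSeries.X : Λ) • w := by
      rw [← hk, hφapp, hw, Finset.smul_sum, ← Finset.sum_add_distrib]
      refine Finset.sum_congr rfl fun i _ => ?_
      rw [hki i, add_smul, mul_smul]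
    -- reduce mod N
    have hXw : (PowerSeries.X : Λ) • w ∈ N :=
      Submodule.smul_mem_smul hXmem Submodule.mem_top
    have hmk0 : (∑ i, c i • b i) = (0 : X ⧸ N) := by
      have h1 : (Submodule.Quotient.mk ((∑ i, ((PowerSeries.C (R := ℤ_[p])) (c i) : Λ) • x i)
          + (PowerSeries.X : Λ) • w) : X ⧸ N) = 0 := by
        rw [← hsplit]; rfl
      rw [Submodule.Quotient.mk_add, (Submodule.Quotient.mk_eq_zero N).mpr hXw, add_zero] at h1
      rw [← h1, hmksum]
    have hc0 : ∀ i, c i = 0 :=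
      Fintype.linearIndependent_iff.mp b.linearIndependent c hmk0
    have hki' : ∀ i, k i = PowerSeries.X * d i := by
      intro i; rw [hki i, hc0 i, map_zero, zero_add]
    have hXw0 : (PowerSeries.X : Λ) • w = 0 := by
      have : (0 : X) = 0 + (PowerSeries.X : Λ) • w := by
        calc (0 : X) = (∑ i, ((PowerSeries.C (R := ℤ_[p])) (c i) : Λ) • x i)
            + (PowerSeries.X : Λ) • w := hsplit
        _ = 0 + (PowerSeries.X : Λ) • w := by
            congr 1
            refine Finset.sum_eq_zero fun i _ => ?_
            rw [hc0 i, map_zero, zero_smul]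
      rw [zero_add] at this
      exact this.symm
    exact ⟨d, by rw [hφapp, ← hw]; exact htors w hXw0, hki'⟩
  -- iterate: kernel elements are divisible by all powers of `X`
  have hpow : ∀ n : ℕ, ∀ k : Fin r → Λ, φ k = 0 → ∀ i,
      (PowerSeries.X : Λ) ^ n ∣ k i := by
    intro n
    induction n with
    | zero => intro k _ i; simpa using one_dvd _
    | succ m ih =>
      intro k hk i
      obtain ⟨d, hd0, hdi⟩ := hstep k hk
      obtain ⟨u, hu⟩ := ih d hd0 i
      exact ⟨u, by rw [hdi i, hu]; ring⟩
  have hinj : Function.Injective φ := by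
    rw [← LinearMap.ker_eq_bot]
    rw [eq_bot_iff]
    intro k hk
    have hk0 : φ k = 0 := hk
    have : k = 0 := by
      funext i
      apply PowerSeries.ext
      intro m
      have hdvd := hpow (m + 1) k hk0 i
      rw [PowerSeries.X_pow_dvd_iff] at hdvd
      simpa using hdvd m (Nat.lt_succ_self m)
    simp [this]
  exact ⟨(LinearEquiv.ofBijective φ ⟨hinj, hsurj⟩).symm⟩
end

section
/- Given the short exact sequence (1): 0 → X → R/𝔪^k ⊕ M → R/𝔪^{k−a} ⊕ R/𝔪^{b} → 0 of finitely generated torsion R-modules with k > exp(M) + 2a, one has b ≤ exp(M). -/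
/-- For a module `M` over a ring `R` with distinguished element `π`,
`modExp π M = exp(M) := min{n ≥ 0 : π^n M = 0}`. -/
noncomputable def modExp {R : Type*} [CommRing R] (π : R)
    (M : Type*) [AddCommGroup M] [Module R M] : ℕ :=
  sInf {n : ℕ | ∀ x : M, π ^ n • x = 0}

private lemma smul_mk_eq {R : Type*} [CommRing R] (I : Ideal R) (r a : R) :
    r • Ideal.Quotient.mk I a = Ideal.Quotient.mk I (r * a) := rfl

private lemma cancel_pow_dvd {R : Type*} [CommRing R] [IsDomain R] {π : R} (hπ0 : π ≠ 0)
    {m n : ℕ} {t : R} (hmn : m ≤ n) (h : π ^ n ∣ π ^ m * t) : π ^ (n - m) ∣ t := by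
  obtain ⟨s, hs⟩ := h
  refine ⟨s, mul_left_cancel₀ (pow_ne_zero m hπ0) ?_⟩
  rw [hs, ← mul_assoc, ← pow_add]
  congr 2
  omega

/-- **Lemma 4.3.5(ii) (`lem:key`(ii)).**
Given the short exact sequence
`(1): 0 → X → R/𝔪^k ⊕ M → R/𝔪^{k−a} ⊕ R/𝔪^{b} → 0`
of finitely generated torsion `R`-modules with `k > exp(M) + 2a`,
one has `b ≤ exp(M)`. -/
theorem dvr_ses_b_le_exp
    (R : Type*) [CommRing R] [IsDomain R] [IsDiscreteValuationRing R]
    (π : R) (hπ : IsLocalRing.maximalIdeal R = Ideal.span {π})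
    (X M : Type*)
    [AddCommGroup X] [Module R X] [Module.Finite R X]
    [AddCommGroup M] [Module R M] [Module.Finite R M]
    (hXtor : Module.IsTorsion R X) (hMtor : Module.IsTorsion R M)
    (k a b : ℕ) (hk : 0 < k)
    -- the short exact sequence (1)
    (f₁ : X →ₗ[R] (R ⧸ IsLocalRing.maximalIdeal R ^ k) × M)
    (g₁ : (R ⧸ IsLocalRing.maximalIdeal R ^ k) × M →ₗ[R]
      (R ⧸ IsLocalRing.maximalIdeal R ^ (k - a)) × (R ⧸ IsLocalRing.maximalIdeal R ^ b))
    (hf₁ : Function.Injective f₁) (hg₁ : Function.Surjective g₁)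
    (hfg₁ : Function.Exact f₁ g₁)
    -- the numerical hypothesis
    (hka : modExp π M + 2 * a < k) :
    b ≤ modExp π M := by
  have hirr : Irreducible π := (IsDiscreteValuationRing.irreducible_iff_uniformizer π).mpr hπ
  have hπ0 : π ≠ 0 := hirr.ne_zero
  have hπu : ¬ IsUnit π := hirr.not_isUnit
  set e := modExp π M with he
  -- π^e kills M
  have hkill : ∀ x : M, π ^ e • x = 0 := by
    have hne : ((⊤ : Submodule R M).annihilator : Set R) ∩ nonZeroDivisors R ≠ ∅ :=
      (Submodule.annihilator_top_inter_nonZeroDivisors hMtor).ne_empty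
    obtain ⟨r, hr1, hr2⟩ := Set.nonempty_iff_ne_empty.mpr hne
    have hr0 : r ≠ 0 := nonZeroDivisors.ne_zero hr2
    obtain ⟨n, u, hru⟩ := IsDiscreteValuationRing.eq_unit_mul_pow_irreducible hr0 hirr
    have hmem : e ∈ {n : ℕ | ∀ x : M, π ^ n • x = 0} := by
      refine Nat.sInf_mem ⟨n, fun x => ?_⟩
      have hr : r • x = 0 := Submodule.mem_annihilator.mp hr1 x Submodule.mem_top
      have : (u : R) • (π ^ n • x) = 0 := by
        rw [← mul_smul, ← hru, hr]
      have := congrArg (fun y => ((u⁻¹ : Rˣ) : R) • y) this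
      simpa [← mul_smul] using this
    exact hmem
  by_contra hbe
  push_neg at hbe
  -- pick preimages
  obtain ⟨s₁, hs₁⟩ := hg₁ (Ideal.Quotient.mk _ 1, 0)
  obtain ⟨s₂, hs₂⟩ := hg₁ (0, Ideal.Quotient.mk _ 1)
  obtain ⟨c₁, hc₁⟩ := Ideal.Quotient.mk_surjective s₁.1
  obtain ⟨c₂, hc₂⟩ := Ideal.Quotient.mk_surjective s₂.1
  set u : (R ⧸ IsLocalRing.maximalIdeal R ^ k) × M := (Ideal.Quotient.mk _ 1, 0) with hu
  -- π^e • sᵢ = (π^e * cᵢ) • u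
  have key : ∀ (s : (R ⧸ IsLocalRing.maximalIdeal R ^ k) × M) (c : R),
      Ideal.Quotient.mk _ c = s.1 → π ^ e • s = (π ^ e * c) • u := by
    intro s c hc
    have h1 : π ^ e • s.1 = (π ^ e * c) • u.1 := by
      rw [← hc]
      show Ideal.Quotient.mk _ (π ^ e * c) = Ideal.Quotient.mk _ (π ^ e * c * 1)
      rw [mul_one]
    have h2 : π ^ e • s.2 = (π ^ e * c) • u.2 := by
      rw [hkill s.2]; simp [hu]
    exact Prod.ext h1 h2
  obtain ⟨cx, hcx⟩ := Ideal.Quotient.mk_surjective (g₁ u).1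
  obtain ⟨cy, hcy⟩ := Ideal.Quotient.mk_surjective (g₁ u).2
  -- translate the two equalities into divisibilities
  have tod : ∀ (n : ℕ) (a' b' : R),
      (Ideal.Quotient.mk (IsLocalRing.maximalIdeal R ^ n) a' = Ideal.Quotient.mk _ b') →
      π ^ n ∣ a' - b' := by
    intro n a' b' h
    have := (Ideal.Quotient.mk_eq_mk_iff_sub_mem a' b').mp h
    rwa [hπ, Ideal.span_singleton_pow, Ideal.mem_span_singleton] at this
  have eq1 : g₁ (π ^ e • s₁) = (π ^ e * c₁) • g₁ u := by
    rw [key s₁ c₁ hc₁, map_smul]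
  have eq2 : g₁ (π ^ e • s₂) = (π ^ e * c₂) • g₁ u := by
    rw [key s₂ c₂ hc₂, map_smul]
  rw [map_smul, hs₁] at eq1
  rw [map_smul, hs₂] at eq2
  -- components
  have d1 : π ^ (k - a) ∣ π ^ e - π ^ e * c₁ * cx := by
    have h := congrArg Prod.fst eq1
    simp only [Prod.smul_fst] at h
    rw [← hcx, smul_mk_eq, smul_mk_eq] at h
    have hd := tod _ _ _ h
    have hr : π ^ e - π ^ e * c₁ * cx = π ^ e * 1 - π ^ e * c₁ * cx := by ring
    rw [hr]; exact hd
  have d2 : π ^ (k - a) ∣ π ^ e * c₂ * cx := by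
    have h := congrArg Prod.fst eq2
    simp only [Prod.smul_fst, smul_zero] at h
    rw [← hcx, smul_mk_eq] at h
    have h' : Ideal.Quotient.mk (IsLocalRing.maximalIdeal R ^ (k - a)) (π ^ e * c₂ * cx)
        = Ideal.Quotient.mk _ 0 := by rw [map_zero]; exact h.symm
    simpa using tod _ _ _ h'
  have d3 : π ^ b ∣ π ^ e * c₂ * cy - π ^ e := by
    have h := congrArg Prod.snd eq2
    simp only [Prod.smul_snd] at h
    rw [← hcy, smul_mk_eq, smul_mk_eq] at h
    have hd := tod _ _ _ h.symm
    have hr : π ^ e * c₂ * cy - π ^ e = π ^ e * c₂ * cy - π ^ e * 1 := by ring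
    rw [hr]; exact hd
  -- numerical facts
  have heb : e ≤ b := hbe.le
  have heka : e < k - a := by omega
  -- c₂ is a unit
  have hc₂u : IsUnit c₂ := by
    by_contra hnc
    have hmem : c₂ ∈ IsLocalRing.maximalIdeal R := hnc
    rw [hπ, Ideal.mem_span_singleton] at hmem
    have h3' : π ^ (b - e) ∣ c₂ * cy - 1 := by
      have : π ^ e * c₂ * cy - π ^ e = π ^ e * (c₂ * cy - 1) := by ring
      exact cancel_pow_dvd hπ0 heb (this ▸ d3)
    have hp1 : π ∣ c₂ * cy - 1 :=
      dvd_trans (dvd_pow_self π (by omega : b - e ≠ 0)) h3'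
    have : π ∣ (1 : R) := by
      have h4 : π ∣ c₂ * cy := hmem.mul_right cy
      have := dvd_sub h4 hp1
      simpa using this
    exact hπu (isUnit_of_dvd_one this)
  -- cancel c₂ in d2
  obtain ⟨v, hv⟩ := hc₂u.exists_right_inv
  have d2' : π ^ (k - a) ∣ π ^ e * cx := by
    have : π ^ e * cx = (π ^ e * c₂ * cx) * v := by
      rw [mul_assoc, mul_comm cx v, ← mul_assoc, mul_assoc (π^e), hv]; ring
    rw [this]
    exact d2.mul_right v
  -- then π^{k-a} ∣ π^e
  have d1' : π ^ (k - a) ∣ π ^ e := by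
    have hc : π ^ (k - a) ∣ π ^ e * c₁ * cx := by
      have : π ^ e * c₁ * cx = (π ^ e * cx) * c₁ := by ring
      rw [this]; exact d2'.mul_right c₁
    have := dvd_add d1 hc
    simpa using this
  -- contradiction
  have : π ^ (k - a - e) ∣ (1 : R) := by
    have := cancel_pow_dvd hπ0 heka.le (t := 1) (by simpa using d1')
    exact this
  have : π ∣ (1 : R) :=
    dvd_trans (dvd_pow_self π (by omega : k - a - e ≠ 0)) this
  exact hπu (isUnit_of_dvd_one this)
end

section
/- Given the short exact sequence (1): 0 → X → R/𝔪^k ⊕ M → R/𝔪^{k−a} ⊕ R/𝔪^{b} → 0 of finitely generated torsion R-modules with k > exp(M) + 2a, one has exp(X) ≤ exp(M) + a. -/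
lemma aux_exists_kill {R : Type*} [CommRing R] [IsDomain R] [IsDiscreteValuationRing R]
    (π : R) (hirr : Irreducible π)
    (M : Type*) [AddCommGroup M] [Module R M] [Module.Finite R M]
    (hMtor : Module.IsTorsion R M) :
    ∃ N : ℕ, ∀ x : M, π ^ N • x = 0 := by
  have key : ∀ x : M, ∃ n : ℕ, π ^ n • x = 0 := by
    intro x
    obtain ⟨r, hrx⟩ := @hMtor x
    have hr0 : (r : R) ≠ 0 := nonZeroDivisors.coe_ne_zero r
    obtain ⟨n, u, hu⟩ := IsDiscreteValuationRing.eq_unit_mul_pow_irreducible hr0 hirr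
    refine ⟨n, ?_⟩
    have h0 : (u : R) • (π ^ n • x) = 0 := by
      rw [← mul_smul, ← hu]; exact hrx
    have h1 := congrArg (fun y => ((u⁻¹ : Rˣ) : R) • y) h0
    simpa [← mul_smul] using h1
  choose n hn using key
  obtain ⟨S, hS⟩ := Module.finite_def.mp (inferInstance : Module.Finite R M)
  refine ⟨S.sup n, fun x => ?_⟩
  have hle : Submodule.span R (↑S : Set M) ≤
      LinearMap.ker (LinearMap.lsmul R M (π ^ S.sup n)) := by
    rw [Submodule.span_le]
    intro s hs
    simp only [SetLike.mem_coe, LinearMap.mem_ker, LinearMap.lsmul_apply]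
    have h2 : n s ≤ S.sup n := Finset.le_sup hs
    rw [← Nat.sub_add_cancel h2, pow_add, mul_smul, hn s, smul_zero]
  rw [hS] at hle
  exact hle Submodule.mem_top

/-- **Lemma 4.3.5(iii) (`lem:key`(iii)).**
Given the short exact sequence
`(1): 0 → X → R/𝔪^k ⊕ M → R/𝔪^{k−a} ⊕ R/𝔪^{b} → 0`
of finitely generated torsion `R`-modules with `k > exp(M) + 2a`,
one has `exp(X) ≤ exp(M) + a`. -/
theorem dvr_ses_exp_X_le
    (R : Type*) [CommRing R] [IsDomain R] [IsDiscreteValuationRing R]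
    (π : R) (hπ : IsLocalRing.maximalIdeal R = Ideal.span {π})
    (X M : Type*)
    [AddCommGroup X] [Module R X] [Module.Finite R X]
    [AddCommGroup M] [Module R M] [Module.Finite R M]
    (hXtor : Module.IsTorsion R X) (hMtor : Module.IsTorsion R M)
    (k a b : ℕ) (hk : 0 < k)
    -- the short exact sequence (1)
    (f₁ : X →ₗ[R] (R ⧸ IsLocalRing.maximalIdeal R ^ k) × M)
    (g₁ : (R ⧸ IsLocalRing.maximalIdeal R ^ k) × M →ₗ[R]
      (R ⧸ IsLocalRing.maximalIdeal R ^ (k - a)) × (R ⧸ IsLocalRing.maximalIdeal R ^ b))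
    (hf₁ : Function.Injective f₁) (hg₁ : Function.Surjective g₁)
    (hfg₁ : Function.Exact f₁ g₁)
    -- the numerical hypothesis
    (hka : modExp π M + 2 * a < k) :
    modExp π X ≤ modExp π M + a := by
  classical
  have hirr : Irreducible π := (IsDiscreteValuationRing.irreducible_iff_uniformizer π).mpr hπ
  set e := modExp π M with he
  have hMe : ∀ x : M, π ^ e • x = 0 := Nat.sInf_mem (aux_exists_kill π hirr M hMtor)
  have h2 : e + (k - a - e) = k - a := by omega
  have hck : e + a + (k - a - e) = k := by omega
  -- quotient helpers
  have mkz : ∀ (i : ℕ) (t : R),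
      Ideal.Quotient.mk (IsLocalRing.maximalIdeal R ^ i) t = 0 ↔ π ^ i ∣ t := by
    intro i t
    rw [Ideal.Quotient.eq_zero_iff_mem, hπ, Ideal.span_singleton_pow, Ideal.mem_span_singleton]
  have mks : ∀ (i : ℕ) (r t : R),
      r • Ideal.Quotient.mk (IsLocalRing.maximalIdeal R ^ i) t
        = Ideal.Quotient.mk (IsLocalRing.maximalIdeal R ^ i) (r * t) := by
    intro i r t
    rw [← smul_eq_mul]
    exact (Submodule.Quotient.mk_smul _ r t).symm
  -- the composed map φ
  set φ : (R ⧸ IsLocalRing.maximalIdeal R ^ k) × M →ₗ[R]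
      (R ⧸ IsLocalRing.maximalIdeal R ^ (k - a)) :=
    (LinearMap.fst R _ _).comp g₁ with hφdef
  have hφs : Function.Surjective φ := by
    intro y
    obtain ⟨p, hp⟩ := hg₁ (y, 0)
    exact ⟨p, by simp [hφdef, hp]⟩
  -- images of M-elements are divisible by π^(k-a-e)
  have hM' : ∀ m : M, ∃ c : R,
      φ (0, m) = Ideal.Quotient.mk (IsLocalRing.maximalIdeal R ^ (k - a))
        (π ^ (k - a - e) * c) := by
    intro m
    obtain ⟨t, ht⟩ := Ideal.Quotient.mk_surjective (φ (0, m))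
    have h0 : π ^ e • φ (0, m) = 0 := by
      rw [← map_smul]
      have hz : (π ^ e • (((0 : R ⧸ IsLocalRing.maximalIdeal R ^ k), m) :
          (R ⧸ IsLocalRing.maximalIdeal R ^ k) × M)) = 0 := by
        have : π ^ e • m = 0 := hMe m
        simp [Prod.smul_mk, this]
      rw [hz, map_zero]
    rw [← ht, mks, mkz] at h0
    obtain ⟨d, hd⟩ := h0
    refine ⟨d, ?_⟩
    rw [← ht]
    congr 1
    have hpe : (π : R) ^ e ≠ 0 := pow_ne_zero _ hirr.ne_zero
    apply mul_left_cancel₀ hpe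
    rw [hd, ← mul_assoc, ← pow_add, h2]
  -- decomposition of φ q
  have hdecomp : ∀ (q : (R ⧸ IsLocalRing.maximalIdeal R ^ k) × M) (u : R),
      Ideal.Quotient.mk (IsLocalRing.maximalIdeal R ^ k) u = q.1 →
      φ q = u • φ (1, 0) + φ (0, q.2) := by
    intro q u hq
    rw [← map_smul, ← map_add]
    congr 1
    have h1 : u • ((1 : R ⧸ IsLocalRing.maximalIdeal R ^ k)) =
        Ideal.Quotient.mk (IsLocalRing.maximalIdeal R ^ k) u := by
      have := mks k u 1
      simpa using this
    ext
    · simp [h1, hq]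
    · simp
  -- the lift s of φ(1,0) is a unit
  obtain ⟨s, hs⟩ := Ideal.Quotient.mk_surjective (φ (1, 0))
  have hs_unit : IsUnit s := by
    obtain ⟨p₀, hp₀⟩ := hφs 1
    obtain ⟨u₀, hu₀⟩ := Ideal.Quotient.mk_surjective p₀.1
    obtain ⟨c₀, hc₀⟩ := hM' p₀.2
    have h1eq : (1 : R ⧸ IsLocalRing.maximalIdeal R ^ (k - a)) =
        Ideal.Quotient.mk _ (u₀ * s) + Ideal.Quotient.mk _ (π ^ (k - a - e) * c₀) := by
      rw [← hp₀, hdecomp p₀ u₀ hu₀, hc₀, ← hs, mks]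
    have hz : Ideal.Quotient.mk (IsLocalRing.maximalIdeal R ^ (k - a))
        (1 - (u₀ * s + π ^ (k - a - e) * c₀)) = 0 := by
      rw [map_sub, map_add, map_one, ← h1eq, sub_self]
    rw [mkz] at hz
    obtain ⟨d, hd⟩ := hz
    by_contra hns
    have hsm : π ∣ s := by
      have hmem : s ∈ IsLocalRing.maximalIdeal R :=
        (IsLocalRing.mem_maximalIdeal s).mpr hns
      rwa [hπ, Ideal.mem_span_singleton] at hmem
    have h1 : (1 : R) = π ^ (k - a) * d + (u₀ * s + π ^ (k - a - e) * c₀) :=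
      sub_eq_iff_eq_add.mp hd
    have hdvd : (π : R) ∣ 1 := by
      rw [h1]
      refine dvd_add (Dvd.dvd.mul_right ?_ d) (dvd_add (Dvd.dvd.mul_left hsm u₀)
        (Dvd.dvd.mul_right ?_ c₀))
      · exact dvd_pow_self π (by omega)
      · exact dvd_pow_self π (by omega)
    exact hirr.not_isUnit (isUnit_of_dvd_one hdvd)
  -- main argument
  refine Nat.sInf_le ?_
  intro x
  obtain ⟨u, hu⟩ := Ideal.Quotient.mk_surjective (f₁ x).1
  have hker : g₁ (f₁ x) = 0 := hfg₁.apply_apply_eq_zero x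
  have hφ0 : φ (f₁ x) = 0 := by simp [hφdef, hker]
  obtain ⟨c, hc⟩ := hM' (f₁ x).2
  rw [hdecomp (f₁ x) u hu, hc, ← hs, mks] at hφ0
  have hdvd : π ^ (k - a) ∣ u * s + π ^ (k - a - e) * c := by
    rw [← mkz, map_add]
    exact hφ0
  have hdus : π ^ (k - a - e) ∣ u * s := by
    have h3 : π ^ (k - a - e) ∣ π ^ (k - a) := pow_dvd_pow π (by omega)
    have h4 : π ^ (k - a - e) ∣ u * s + π ^ (k - a - e) * c := h3.trans hdvd
    have h5 : π ^ (k - a - e) ∣ π ^ (k - a - e) * c := Dvd.intro c rfl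
    simpa using (dvd_sub h4 h5)
  obtain ⟨v, hv⟩ := hs_unit
  have hdu : π ^ (k - a - e) ∣ u := by
    have h6 : π ^ (k - a - e) ∣ u * s * ((v⁻¹ : Rˣ) : R) := hdus.mul_right _
    have h7 : u * s * ((v⁻¹ : Rˣ) : R) = u := by
      rw [← hv, mul_assoc, Units.mul_inv, mul_one]
    rwa [h7] at h6
  obtain ⟨w, hw⟩ := hdu
  have hfx : f₁ (π ^ (e + a) • x) = 0 := by
    rw [map_smul]
    have hfst : π ^ (e + a) • (f₁ x).1 = 0 := by
      rw [← hu, mks, mkz, hw, ← mul_assoc, ← pow_add, hck]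
      exact Dvd.intro w rfl
    have hsnd : π ^ (e + a) • (f₁ x).2 = 0 := by
      rw [pow_add, mul_comm, mul_smul, hMe, smul_zero]
    have : π ^ (e + a) • f₁ x = 0 := by
      rw [Prod.ext_iff]
      exact ⟨hfst, hsnd⟩
    exact this
  have : π ^ (e + a) • x = 0 := hf₁ (by rw [hfx, map_zero])
  exact this
end

section
/- With the two short exact sequences (1): 0 → X → R/𝔪^k ⊕ M → R/𝔪^{k−a} ⊕ R/𝔪^{b} → 0 and (2): 0 → X → R/𝔪^k ⊕ M′ → R/𝔪^{a′} ⊕ R/𝔪^{k−b′} → 0 of finitely generated torsion R-modules satisfying k > exp(M) + 2a and a′ ≤ a, and with M ≅ M₀ ⊕ M₀ and M′ ≅ M₀′ ⊕ M₀′, there exists an injective R-module homomorphism X ↪ M′ ⊕ R/𝔪^{exp(X)}. -/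
/-- **Proposition 4.3.6(ii) (`prop:key`(ii)).**
Given the two short exact sequences
`(1): 0 → X → R/𝔪^k ⊕ M → R/𝔪^{k−a} ⊕ R/𝔪^{b} → 0` and
`(2): 0 → X → R/𝔪^k ⊕ M′ → R/𝔪^{a′} ⊕ R/𝔪^{k−b′} → 0`
of finitely generated torsion `R`-modules with `k > exp(M) + 2a`, `a′ ≤ a`,
`M ≅ M₀ ⊕ M₀` and `M′ ≅ M₀′ ⊕ M₀′`, there exists an injective `R`-module
homomorphism `X ↪ M′ ⊕ R/𝔪^{exp(X)}`. -/
theorem dvr_ses_embed_X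
    (R : Type*) [CommRing R] [IsDomain R] [IsDiscreteValuationRing R]
    (π : R) (hπ : IsLocalRing.maximalIdeal R = Ideal.span {π})
    (X M M' M₀ M₀' : Type*)
    [AddCommGroup X] [Module R X] [Module.Finite R X]
    [AddCommGroup M] [Module R M] [Module.Finite R M]
    [AddCommGroup M'] [Module R M'] [Module.Finite R M']
    [AddCommGroup M₀] [Module R M₀] [AddCommGroup M₀'] [Module R M₀']
    (hXtor : Module.IsTorsion R X) (hMtor : Module.IsTorsion R M)
    (hM'tor : Module.IsTorsion R M')
    (k a b a' b' : ℕ) (hk : 0 < k)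
    -- the short exact sequence (1)
    (f₁ : X →ₗ[R] (R ⧸ IsLocalRing.maximalIdeal R ^ k) × M)
    (g₁ : (R ⧸ IsLocalRing.maximalIdeal R ^ k) × M →ₗ[R]
      (R ⧸ IsLocalRing.maximalIdeal R ^ (k - a)) × (R ⧸ IsLocalRing.maximalIdeal R ^ b))
    (hf₁ : Function.Injective f₁) (hg₁ : Function.Surjective g₁)
    (hfg₁ : Function.Exact f₁ g₁)
    -- the short exact sequence (2)
    (f₂ : X →ₗ[R] (R ⧸ IsLocalRing.maximalIdeal R ^ k) × M')
    (g₂ : (R ⧸ IsLocalRing.maximalIdeal R ^ k) × M' →ₗ[R]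
      (R ⧸ IsLocalRing.maximalIdeal R ^ a') × (R ⧸ IsLocalRing.maximalIdeal R ^ (k - b')))
    (hf₂ : Function.Injective f₂) (hg₂ : Function.Surjective g₂)
    (hfg₂ : Function.Exact f₂ g₂)
    -- the numerical hypotheses
    (hka : modExp π M + 2 * a < k) (ha' : a' ≤ a)
    -- M and M' are direct sums of two isomorphic modules
    (hM₀ : Nonempty (M ≃ₗ[R] M₀ × M₀)) (hM₀' : Nonempty (M' ≃ₗ[R] M₀' × M₀')) :
    ∃ f : X →ₗ[R] M' × (R ⧸ IsLocalRing.maximalIdeal R ^ modExp π X),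
      Function.Injective f := by
  classical
  let I : Ideal R := IsLocalRing.maximalIdeal R
  have hπI : I = Ideal.span {π} := hπ
  have hf₁' : Function.Injective f₁ := hf₁
  have hf₂' : Function.Injective f₂ := hf₂
  have hirr : Irreducible π := (IsDiscreteValuationRing.irreducible_iff_uniformizer π).mpr hπ
  have hπ0 : π ≠ 0 := hirr.ne_zero
  have hmem : ∀ (n : ℕ) (r : R), r ∈ I ^ n ↔ π ^ n ∣ r := by
    intro n r
    rw [hπI, Ideal.span_singleton_pow, Ideal.mem_span_singleton]
  -- π^k kills R ⧸ I^k
  have hQk : ∀ y : (R ⧸ I ^ k), π ^ k • y = 0 := by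
    intro y
    obtain ⟨r, rfl⟩ := Submodule.mkQ_surjective (I ^ k) y
    rw [Submodule.mkQ_apply, ← Submodule.Quotient.mk_smul, Submodule.Quotient.mk_eq_zero]
    exact (hmem k _).mpr ⟨r, by rw [smul_eq_mul]⟩
  -- a power of π kills M
  have hMkill : ∃ n : ℕ, ∀ x : M, π ^ n • x = 0 := by
    obtain ⟨s, hs⟩ := Module.Finite.fg_top (R := R) (M := M)
    have hchoice : ∀ x : M, ∃ c : R, c ≠ 0 ∧ c • x = 0 := by
      intro x
      obtain ⟨c, hc⟩ := @hMtor x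
      exact ⟨(c : R), nonZeroDivisors.ne_zero c.2, hc⟩
    choose c hc0 hcx using hchoice
    set P : R := ∏ x ∈ s, c x with hP
    have hP0 : P ≠ 0 := Finset.prod_ne_zero_iff.mpr fun x _ => hc0 x
    have hPall : ∀ m : M, P • m = 0 := by
      intro m
      have hm : m ∈ Submodule.span R (s : Set M) := by rw [hs]; trivial
      induction hm using Submodule.span_induction with
      | mem x hx =>
        have : P = (∏ y ∈ s.erase x, c y) * c x := (Finset.prod_erase_mul s c hx).symm
        rw [this, mul_smul, hcx, smul_zero]
      | zero => rw [smul_zero]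
      | add x y _ _ hx hy => rw [smul_add, hx, hy, add_zero]
      | smul r x _ hx => rw [smul_comm, hx, smul_zero]
    obtain ⟨n, u, hu⟩ := IsDiscreteValuationRing.eq_unit_mul_pow_irreducible hP0 hirr
    refine ⟨n, fun m => ?_⟩
    have := hPall m
    rw [hu, mul_smul] at this
    have h2 : (π ^ n) • m = ((u⁻¹ : Rˣ) : R) • ((u : R) • π ^ n • m) := by
      rw [smul_smul, smul_smul, Units.inv_mul, one_mul]
    rw [h2, this, smul_zero]
  have heM : ∀ x : M, π ^ modExp π M • x = 0 :=
    Nat.sInf_mem (⟨hMkill.choose, hMkill.choose_spec⟩ : Set.Nonempty {n : ℕ | ∀ x : M, π ^ n • x = 0})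
  have heMk : modExp π M ≤ k := le_of_lt (lt_of_le_of_lt (Nat.le_add_right _ _) hka)
  -- π^k kills M
  have hMk : ∀ x : M, π ^ k • x = 0 := by
    intro x
    have : π ^ k = π ^ (k - modExp π M) * π ^ modExp π M := by
      rw [← pow_add, Nat.sub_add_cancel heMk]
    rw [this, mul_smul, heM, smul_zero]
  -- π^k kills X
  have hkX : ∀ x : X, π ^ k • x = 0 := by
    intro x
    apply hf₁'
    rw [map_smul, map_zero, Prod.smul_def, Prod.ext_iff]
    exact ⟨hQk _, hMk _⟩
  set e := modExp π X with he
  have heX : ∀ x : X, π ^ e • x = 0 :=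
    Nat.sInf_mem (⟨k, hkX⟩ : Set.Nonempty {n : ℕ | ∀ x : X, π ^ n • x = 0})
  have hek : e ≤ k := Nat.sInf_le hkX
  set d := k - e with hd
  have hde : d + e = k := Nat.sub_add_cancel hek
  -- the multiplication-by-π^d map R⧸I^e → R⧸I^k
  set μ : (R ⧸ I ^ e) →ₗ[R] (R ⧸ I ^ k) :=
    Submodule.liftQ (I ^ e) ((I ^ k).mkQ.comp (LinearMap.lsmul R R (π ^ d))) (by
      intro r hr
      simp only [LinearMap.mem_ker, LinearMap.comp_apply, LinearMap.lsmul_apply,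
        Submodule.mkQ_apply, smul_eq_mul]
      rw [Submodule.Quotient.mk_eq_zero]
      obtain ⟨s, rfl⟩ := (hmem e r).mp hr
      exact (hmem k _).mpr ⟨s, by rw [← mul_assoc, ← pow_add, hde]⟩) with hμ
  have hμapp : ∀ r : R, μ (Submodule.Quotient.mk r) = Submodule.Quotient.mk (π ^ d * r) := by
    intro r
    rw [hμ, Submodule.liftQ_apply, LinearMap.comp_apply, LinearMap.lsmul_apply,
      Submodule.mkQ_apply, smul_eq_mul]
  have hμinj : Function.Injective μ := by
    rw [← LinearMap.ker_eq_bot, LinearMap.ker_eq_bot']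
    intro y hy
    obtain ⟨r, rfl⟩ := Submodule.mkQ_surjective (I ^ e) y
    rw [Submodule.mkQ_apply, hμapp, Submodule.Quotient.mk_eq_zero] at hy
    obtain ⟨s, hsr⟩ := (hmem k _).mp hy
    rw [Submodule.mkQ_apply, Submodule.Quotient.mk_eq_zero]
    refine (hmem e r).mpr ⟨s, ?_⟩
    have : π ^ d * r = π ^ d * (π ^ e * s) := by
      rw [hsr, ← mul_assoc, ← pow_add, hde]
    exact mul_left_cancel₀ (pow_ne_zero d hπ0) this
  -- the first component of f₂ lands in range μ
  have hrange : ∀ x : X, (f₂ x).1 ∈ LinearMap.range μ := by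
    intro x
    have h0 : π ^ e • f₂ x = 0 := by rw [← map_smul, heX, map_zero]
    have h1 : π ^ e • (f₂ x).1 = 0 := by
      rw [Prod.smul_def, Prod.ext_iff] at h0
      exact h0.1
    obtain ⟨r, hr⟩ := Submodule.mkQ_surjective (I ^ k) (f₂ x).1
    rw [← hr, Submodule.mkQ_apply, ← Submodule.Quotient.mk_smul,
      Submodule.Quotient.mk_eq_zero, smul_eq_mul] at h1
    obtain ⟨s, hsr⟩ := (hmem k _).mp h1
    have hrs : r = π ^ d * s := by
      apply mul_left_cancel₀ (pow_ne_zero e hπ0)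
      rw [hsr, ← mul_assoc, ← pow_add, Nat.add_comm e d, hde]
    refine ⟨Submodule.Quotient.mk s, ?_⟩
    rw [hμapp, ← hrs, ← Submodule.mkQ_apply, hr]
  -- assemble the map
  set h : X →ₗ[R] (R ⧸ I ^ k) := (LinearMap.fst R _ M').comp f₂ with hh
  set h' : X →ₗ[R] LinearMap.range μ := h.codRestrict (LinearMap.range μ) hrange with hh'
  set eμ := LinearEquiv.ofInjective μ hμinj with heμ
  set ψ : X →ₗ[R] (R ⧸ I ^ e) := (eμ.symm : LinearMap.range μ →ₗ[R] (R ⧸ I ^ e)).comp h' with hψ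
  refine ⟨LinearMap.prod ((LinearMap.snd R _ M').comp f₂) ψ, ?_⟩
  rw [← LinearMap.ker_eq_bot, LinearMap.ker_eq_bot']
  intro x hx
  rw [LinearMap.prod_apply, Prod.ext_iff] at hx
  obtain ⟨hx2, hxψ⟩ := hx
  have hh'0 : h' x = 0 := by
    have := congrArg eμ hxψ
    rw [hψ] at hxψ
    have : eμ.symm (h' x) = 0 := hxψ
    have := congrArg eμ this
    rw [LinearEquiv.apply_symm_apply, map_zero] at this
    exact this
  have hx1 : (f₂ x).1 = 0 := by
    have : ((h' x : LinearMap.range μ) : R ⧸ I ^ k) = h x := rfl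
    rw [hh'0] at this
    simpa [hh] using this.symm
  apply hf₂'
  rw [map_zero, Prod.ext_iff, Prod.fst_zero, Prod.snd_zero]
  exact ⟨hx1, hx2⟩
end

section
/- Let R be a discrete valuation ring with maximal ideal 𝔪, let X be a finitely generated torsion R-module, and let C ⊆ X be a cyclic R-submodule (generated by one element). Then there exists an injective R-module homomorphism X ↪ (X/C) ⊕ R/𝔪^{exp(X)}. -/
/-- Let `R` be a discrete valuation ring with maximal ideal `𝔪` and uniformizer
`π`, let `X` be a finitely generated torsion `R`-module, and let `C ⊆ X` be a
cyclic `R`-submodule. Then there exists an injective `R`-module homomorphism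
`X ↪ (X/C) ⊕ R/𝔪^{exp(X)}`. -/
theorem dvr_embed_into_quotient_of_cyclic
    (R : Type*) [CommRing R] [IsDomain R] [IsDiscreteValuationRing R]
    (π : R) (hπ : IsLocalRing.maximalIdeal R = Ideal.span {π})
    (X : Type*) [AddCommGroup X] [Module R X] [Module.Finite R X]
    (hXtor : Module.IsTorsion R X)
    (C : Submodule R X) (hC : ∃ x : X, C = Submodule.span R {x}) :
    ∃ f : X →ₗ[R] (X ⧸ C) × (R ⧸ IsLocalRing.maximalIdeal R ^ modExp π X),
      Function.Injective f := by
  classical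
  obtain ⟨x₀, rfl⟩ := hC
  have hirr : Irreducible π := (IsDiscreteValuationRing.irreducible_iff_uniformizer π).mpr hπ
  have hπ0 : π ≠ 0 := hirr.ne_zero
  -- `e := modExp π X` kills `X`
  have hkey : ∀ x : X, ∃ n : ℕ, π ^ n • x = 0 := by
    intro x
    obtain ⟨a, ha⟩ := @hXtor x
    obtain ⟨n, u, hnu⟩ := IsDiscreteValuationRing.associated_pow_irreducible
      (nonZeroDivisors.ne_zero a.2) hirr
    have ha' : (a : R) • x = 0 := ha
    exact ⟨n, by rw [← hnu, mul_comm, mul_smul, ha', smul_zero]⟩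
  have hnonempty : {n : ℕ | ∀ x : X, π ^ n • x = 0}.Nonempty := by
    obtain ⟨s, hs⟩ := Module.Finite.fg_top (R := R) (M := X)
    refine ⟨s.sup fun x => (hkey x).choose, fun x => ?_⟩
    have hx : x ∈ Submodule.span R (s : Set X) := by rw [hs]; trivial
    induction hx using Submodule.span_induction with
    | mem y hy =>
        have hle : (hkey y).choose ≤ s.sup fun x => (hkey x).choose :=
          Finset.le_sup (f := fun x => (hkey x).choose) hy
        rw [← Nat.sub_add_cancel hle, pow_add, mul_smul, (hkey y).choose_spec, smul_zero]
    | zero => rw [smul_zero]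
    | add y z _ _ hy hz => rw [smul_add, hy, hz, add_zero]
    | smul r y _ hy => rw [smul_comm, hy, smul_zero]
  set e := modExp π X with he_def
  have he : ∀ x : X, π ^ e • x = 0 := Nat.sInf_mem hnonempty
  -- the ideal `I = (π^e)`
  set I : Ideal R := Ideal.span {π ^ e} with hI_def
  have hmI : IsLocalRing.maximalIdeal R ^ e = I := by
    rw [hπ, Ideal.span_singleton_pow]
  rw [hmI]
  have hπe0 : π ^ e ≠ 0 := pow_ne_zero e hπ0
  -- the annihilator of x₀ is (π^c) with c ≤ e
  set φ : R →ₗ[R] X := LinearMap.toSpanSingleton R X x₀ with hφ_def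
  set Ann : Ideal R := LinearMap.ker φ with hAnn_def
  have hπeAnn : π ^ e ∈ Ann := by
    simp only [hAnn_def, LinearMap.mem_ker, hφ_def, LinearMap.toSpanSingleton_apply]
    exact he x₀
  have hAnnbot : Ann ≠ (⊥ : Ideal R) := fun h => hπe0 (by rw [h, Ideal.mem_bot] at hπeAnn; exact hπeAnn)
  obtain ⟨c, hAnn⟩ := IsDiscreteValuationRing.ideal_eq_span_pow_irreducible hAnnbot hirr
  have hce : c ≤ e := by
    rw [hAnn] at hπeAnn
    exact (pow_dvd_pow_iff hπ0 hirr.not_isUnit).mp (Ideal.mem_span_singleton.mp hπeAnn)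
  -- X is torsion by I, hence a module over S := R ⧸ I
  have hXT : Module.IsTorsionBySet R X (I : Set R) := by
    rintro x ⟨r, hr⟩
    obtain ⟨b, rfl⟩ := Ideal.mem_span_singleton.mp hr
    show (π ^ e * b) • x = 0
    rw [mul_smul]
    exact he _
  letI instS : Module (R ⧸ I) X := hXT.module
  -- the S-action on R ⧸ I itself agrees with the R-action
  have hsm : ∀ (r : R) (q : R ⧸ I), r • q = Ideal.Quotient.mk I r * q := by
    intro r q
    obtain ⟨a, rfl⟩ := Ideal.Quotient.mk_surjective q
    rw [← map_mul]
    exact (Submodule.Quotient.mk_smul I r a).symm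
  -- Baer's criterion for S as a module over itself
  have baer : Module.Baer (R ⧸ I) (R ⧸ I) := by
    intro Is g
    set J' : Ideal R := Is.comap (Ideal.Quotient.mk I) with hJ'_def
    have hsur : Function.Surjective (Ideal.Quotient.mk I) := Ideal.Quotient.mk_surjective
    have hmap : Is = J'.map (Ideal.Quotient.mk I) :=
      (Ideal.map_comap_of_surjective _ hsur Is).symm
    have hπeJ' : π ^ e ∈ J' := by
      have : Ideal.Quotient.mk I (π ^ e) = 0 :=
        Ideal.Quotient.eq_zero_iff_mem.mpr (Ideal.subset_span rfl)
      simp only [hJ'_def, Ideal.mem_comap, this]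
      exact Is.zero_mem
    have hJ'bot : J' ≠ (⊥ : Ideal R) := fun h => hπe0 (by rw [h, Ideal.mem_bot] at hπeJ'; exact hπeJ')
    obtain ⟨j, hJ'⟩ := IsDiscreteValuationRing.ideal_eq_span_pow_irreducible hJ'bot hirr
    have hje : j ≤ e := by
      rw [hJ'] at hπeJ'
      exact (pow_dvd_pow_iff hπ0 hirr.not_isUnit).mp (Ideal.mem_span_singleton.mp hπeJ')
    have memIs : (Ideal.Quotient.mk I (π ^ j)) ∈ Is := by
      have : π ^ j ∈ J' := hJ' ▸ Ideal.subset_span rfl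
      exact this
    set v : R ⧸ I := g ⟨Ideal.Quotient.mk I (π ^ j), memIs⟩ with hv_def
    have hzero : (Ideal.Quotient.mk I (π ^ (e - j))) • (⟨Ideal.Quotient.mk I (π ^ j), memIs⟩ : Is) = 0 := by
      apply Subtype.ext
      show (Ideal.Quotient.mk I (π ^ (e - j))) • (Ideal.Quotient.mk I (π ^ j)) = 0
      rw [smul_eq_mul, ← map_mul, ← pow_add, Nat.sub_add_cancel hje]
      exact Ideal.Quotient.eq_zero_iff_mem.mpr (Ideal.subset_span rfl)
    have hv0 : (Ideal.Quotient.mk I (π ^ (e - j))) • v = 0 := by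
      have hgs := g.map_smul (Ideal.Quotient.mk I (π ^ (e - j)))
        ⟨Ideal.Quotient.mk I (π ^ j), memIs⟩
      rw [hzero, map_zero] at hgs
      rw [hv_def]
      exact hgs.symm
    obtain ⟨r, hr⟩ := hsur v
    have hrI : π ^ (e - j) * r ∈ I := by
      rw [← Ideal.Quotient.eq_zero_iff_mem, map_mul, ← smul_eq_mul, hr, hv0]
    obtain ⟨t, ht⟩ := Ideal.mem_span_singleton.mp hrI
    have hrt : r = π ^ j * t := by
      apply mul_left_cancel₀ (pow_ne_zero (e - j) hπ0)
      rw [ht, ← mul_assoc, ← pow_add, Nat.sub_add_cancel hje]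
    refine ⟨LinearMap.toSpanSingleton _ _ (Ideal.Quotient.mk I t), fun x hx => ?_⟩
    have hxmem : x ∈ Ideal.span {(Ideal.Quotient.mk I (π ^ j))} := by
      rw [hmap, hJ', Ideal.map_span, Set.image_singleton] at hx
      exact hx
    obtain ⟨d, hd⟩ := Ideal.mem_span_singleton'.mp hxmem
    have hx' : (⟨x, hx⟩ : Is) = d • ⟨Ideal.Quotient.mk I (π ^ j), memIs⟩ :=
      Subtype.ext (by rw [SetLike.val_smul, smul_eq_mul]; exact hd.symm)
    rw [hx', map_smul, ← hv_def, LinearMap.toSpanSingleton_apply, ← hd, ← hr, hrt]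
    rw [smul_eq_mul, smul_eq_mul, map_mul]
    ring
  -- C as a submodule over S
  set C' : Submodule (R ⧸ I) X :=
    { carrier := (Submodule.span R {x₀} : Submodule R X)
      add_mem' := fun h1 h2 => Submodule.add_mem _ h1 h2
      zero_mem' := Submodule.zero_mem _
      smul_mem' := by
        rintro sc x hx
        obtain ⟨r, rfl⟩ := Ideal.Quotient.mk_surjective sc
        show (Ideal.Quotient.mk I r) • x ∈ _
        rw [hXT.mk_smul]
        exact Submodule.smul_mem _ r hx } with hC'_def
  -- the injective R-linear map span{x₀} → R ⧸ I
  have hrange : LinearMap.range φ = Submodule.span R {x₀} :=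
    (LinearMap.span_singleton_eq_range R X x₀).symm
  set eC : (R ⧸ Ann) ≃ₗ[R] (Submodule.span R {x₀} : Submodule R X) :=
    (LinearMap.quotKerEquivRange φ).trans (LinearEquiv.ofEq _ _ hrange) with heC_def
  have hle : Ann ≤ Submodule.comap (LinearMap.lsmul R R (π ^ (e - c))) I := by
    intro a ha
    rw [hAnn] at ha
    obtain ⟨b, rfl⟩ := Ideal.mem_span_singleton.mp ha
    show π ^ (e - c) • (π ^ c * b) ∈ I
    rw [smul_eq_mul, ← mul_assoc, ← pow_add, Nat.sub_add_cancel hce]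
    exact Ideal.mem_span_singleton.mpr ⟨b, rfl⟩
  set μ : (R ⧸ Ann) →ₗ[R] (R ⧸ I) :=
    Submodule.mapQ Ann I (LinearMap.lsmul R R (π ^ (e - c))) hle with hμ_def
  have hμinj : Function.Injective μ := by
    rw [← LinearMap.ker_eq_bot]
    rw [Submodule.eq_bot_iff]
    intro q hq
    obtain ⟨a, rfl⟩ := Submodule.Quotient.mk_surjective Ann q
    rw [LinearMap.mem_ker, hμ_def, Submodule.mapQ_apply, Submodule.Quotient.mk_eq_zero] at hq
    have : π ^ (e - c) * a ∈ I := hq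
    obtain ⟨b, hb⟩ := Ideal.mem_span_singleton.mp this
    have hab : a = π ^ c * b := by
      apply mul_left_cancel₀ (pow_ne_zero (e - c) hπ0)
      rw [hb, ← mul_assoc, ← pow_add, Nat.sub_add_cancel hce]
    rw [Submodule.Quotient.mk_eq_zero, hAnn]
    exact Ideal.mem_span_singleton.mpr ⟨b, hab⟩
  set g₀R : (Submodule.span R {x₀} : Submodule R X) →ₗ[R] (R ⧸ I) :=
    μ ∘ₗ (eC.symm : _ →ₗ[R] _) with hg₀R_def
  have hg₀inj : Function.Injective g₀R := hμinj.comp eC.symm.injective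
  -- transfer to an S-linear map
  set g₀ : C' →ₗ[R ⧸ I] (R ⧸ I) :=
    { toFun := fun y => g₀R ⟨y.1, y.2⟩
      map_add' := fun a b => g₀R.map_add ⟨a.1, a.2⟩ ⟨b.1, b.2⟩
      map_smul' := by
        rintro sc y
        obtain ⟨r, rfl⟩ := Ideal.Quotient.mk_surjective sc
        set z : C' := Ideal.Quotient.mk I r • y with hz
        have h1 : (z : X) = r • (y : X) := hXT.mk_smul r (y : X)
        have h2 : (⟨(z : X), z.2⟩ : (Submodule.span R {x₀} : Submodule R X))
            = r • ⟨(y : X), y.2⟩ := Subtype.ext h1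
        show g₀R ⟨(z : X), z.2⟩ = _
        rw [h2, map_smul, hsm]
        rfl } with hg₀_def
  -- extend along C' ↪ X using Baer
  obtain ⟨h, hh⟩ := baer.extension_property C'.subtype C'.injective_subtype g₀
  -- convert h to an R-linear map
  set F : X →ₗ[R] (R ⧸ I) :=
    { toFun := h
      map_add' := h.map_add
      map_smul' := by
        intro r x
        show h (r • x) = r • h x
        rw [← hXT.mk_smul r x, map_smul, smul_eq_mul, ← hsm] } with hF_def
  refine ⟨((Submodule.span R {x₀}).mkQ).prod F, ?_⟩
  rw [← LinearMap.ker_eq_bot, Submodule.eq_bot_iff]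
  intro x hx
  rw [LinearMap.mem_ker, LinearMap.prod_apply] at hx
  have h1 : (Submodule.span R {x₀}).mkQ x = 0 := congrArg Prod.fst hx
  have h2 : F x = 0 := congrArg Prod.snd hx
  have hxC : x ∈ Submodule.span R {x₀} := (Submodule.Quotient.mk_eq_zero _).mp h1
  have h3 : g₀ ⟨x, hxC⟩ = 0 := by
    have h5 := LinearMap.congr_fun hh ⟨x, hxC⟩
    rw [← h5]
    exact h2
  have h4 : g₀R ⟨x, hxC⟩ = 0 := h3
  have h7 : g₀R ⟨x, hxC⟩ = g₀R 0 := by rw [h4, map_zero]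
  have h6 := hg₀inj h7
  exact congrArg Subtype.val h6
end
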